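/- Let E and F be pseudo-normed real vector spaces, let s_0 < s < s_1 be real numbers, q ∈ [1,∞], r > 0, and let Φ : B_{s,q}(0,r) → Σ^{s_0}_∞(F) satisfy the weak Lipschitz and tame estimates. Then the mapping Φ : B_{s,q}(0,r) → Σ^s_q(F) is continuous, where B_{s,q}(0,r) carries the distance d(v,w) = ‖v−w‖_{Σ^s_q(E)} and Σ^s_q(F) carries the distance d(f,g) = ‖f−g‖_{Σ^s_q(F)}. -/

import Mathlib

open Filter
open scoped ENNReal NNReal

/-- A pseudo-norm on a real vector space: nonnegative, symmetric, subadditive,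
and vanishing exactly at `0`. -/
structure IsPseudoNorm {E : Type*} [AddCommGroup E] [Module ℝ E] (N : E → ℝ) : Prop where
  nonneg : ∀ x, 0 ≤ N x
  neg : ∀ x, N (-x) = N x
  add_le : ∀ x y, N (x + y) ≤ N x + N y
  eq_zero_iff : ∀ x, N x = 0 ↔ x = 0

/-- The `Σ^s_q(E)` pseudo-norm of a sequence `f : ℕ → E`:
`(∑_k 2^{qks} ‖f_k‖_E^q)^{1/q}` for `q < ∞` and `sup_k 2^{ks} ‖f_k‖_E` for `q = ∞`. -/
noncomputable def sigmaNorm {E : Type*} (N : E → ℝ) (s : ℝ) (q : ℝ≥0∞) (f : ℕ → E) : ℝ≥0∞ :=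
  if q = ⊤ then ⨆ k : ℕ, ENNReal.ofReal ((2 : ℝ) ^ ((k : ℝ) * s) * N (f k))
  else (∑' k : ℕ, ENNReal.ofReal ((2 : ℝ) ^ ((k : ℝ) * s) * N (f k)) ^ q.toReal) ^ (1 / q.toReal)

/-- Membership in `Σ^s_q(E)`: finiteness of the norm when `q < ∞`, and
`2^{ks}‖f_k‖_E → 0` when `q = ∞`. -/
def memSigma {E : Type*} (N : E → ℝ) (s : ℝ) (q : ℝ≥0∞) (f : ℕ → E) : Prop :=
  if q = ⊤ then Tendsto (fun k : ℕ => (2 : ℝ) ^ ((k : ℝ) * s) * N (f k)) atTop (nhds 0)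
  else sigmaNorm N s q f < ⊤

/-- Friedrichs smoothing operator `S_n`: truncation of a sequence after index `n`. -/
def smoothS {E : Type*} [Zero E] (n : ℕ) (f : ℕ → E) : ℕ → E :=
  fun k => if k ≤ n then f k else 0

section Helpers

open ENNReal MeasureTheory

/-- The `ℓ^q`-type norm of a sequence of extended nonnegative reals. -/
noncomputable def lnorm (q : ℝ≥0∞) (u : ℕ → ℝ≥0∞) : ℝ≥0∞ :=
  if q = ⊤ then ⨆ k : ℕ, u k
  else (∑' k : ℕ, u k ^ q.toReal) ^ (1 / q.toReal)

lemma sigmaNorm_eq_lnorm {E : Type*} (N : E → ℝ) (s : ℝ) (q : ℝ≥0∞) (f : ℕ → E) :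
    sigmaNorm N s q f = lnorm q (fun k => ENNReal.ofReal ((2 : ℝ) ^ ((k : ℝ) * s) * N (f k))) := rfl

lemma sigmaNorm_one_eq {E : Type*} (N : E → ℝ) (t : ℝ) (w : ℕ → E) :
    sigmaNorm N t 1 w = ∑' j : ℕ, ENNReal.ofReal ((2 : ℝ) ^ ((j : ℝ) * t) * N (w j)) := by
  simp [sigmaNorm]

lemma sigmaNorm_top_eq {E : Type*} (N : E → ℝ) (t : ℝ) (w : ℕ → E) :
    sigmaNorm N t ⊤ w = ⨆ k : ℕ, ENNReal.ofReal ((2 : ℝ) ^ ((k : ℝ) * t) * N (w k)) :=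
  if_pos rfl

lemma toReal_one_le {q : ℝ≥0∞} (hq : 1 ≤ q) (hqt : q ≠ ⊤) : 1 ≤ q.toReal := by
  simpa using ENNReal.toReal_mono hqt hq

lemma lnorm_mono (q : ℝ≥0∞) {u v : ℕ → ℝ≥0∞} (h : ∀ k, u k ≤ v k) :
    lnorm q u ≤ lnorm q v := by
  rcases eq_or_ne q ⊤ with hqt | hqt
  · simp only [lnorm, if_pos hqt]
    exact iSup_mono h
  · simp only [lnorm, if_neg hqt]
    exact ENNReal.rpow_le_rpow
      (ENNReal.tsum_le_tsum fun k => ENNReal.rpow_le_rpow (h k) ENNReal.toReal_nonneg)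
      (by positivity)

lemma le_lnorm {q : ℝ≥0∞} (hq : 1 ≤ q) (u : ℕ → ℝ≥0∞) (k : ℕ) : u k ≤ lnorm q u := by
  rcases eq_or_ne q ⊤ with hqt | hqt
  · simp only [lnorm, if_pos hqt]
    exact le_iSup u k
  · simp only [lnorm, if_neg hqt]
    have hp1 : 1 ≤ q.toReal := toReal_one_le hq hqt
    have hp : 0 < q.toReal := by linarith
    calc u k = (u k ^ q.toReal) ^ (1 / q.toReal) := by
          rw [← ENNReal.rpow_mul, mul_one_div_cancel hp.ne', ENNReal.rpow_one]
      _ ≤ _ := ENNReal.rpow_le_rpow (ENNReal.le_tsum k) (by positivity)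

lemma lnorm_le_tsum {q : ℝ≥0∞} (hq : 1 ≤ q) (u : ℕ → ℝ≥0∞) : lnorm q u ≤ ∑' k, u k := by
  rcases eq_or_ne q ⊤ with hqt | hqt
  · simp only [lnorm, if_pos hqt]
    exact iSup_le fun k => ENNReal.le_tsum k
  · simp only [lnorm, if_neg hqt]
    have hp1 : 1 ≤ q.toReal := toReal_one_le hq hqt
    have hp : 0 < q.toReal := by linarith
    have hb : ∀ k, u k ^ q.toReal ≤ (∑' i, u i) ^ (q.toReal - 1) * u k := by
      intro k
      calc u k ^ q.toReal = u k ^ (q.toReal - 1) * u k ^ (1 : ℝ) := by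
            rw [← ENNReal.rpow_add_of_nonneg _ _ (by linarith) zero_le_one]
            congr 1; ring
        _ ≤ (∑' i, u i) ^ (q.toReal - 1) * u k := by
            rw [ENNReal.rpow_one]
            exact mul_le_mul_left (ENNReal.rpow_le_rpow (ENNReal.le_tsum k) (by linarith)) _
    have key : (∑' i, u i) ^ q.toReal = (∑' i, u i) ^ (q.toReal - 1) * (∑' i, u i) := by
      nth_rewrite 3 [← ENNReal.rpow_one (∑' i, u i)]
      rw [← ENNReal.rpow_add_of_nonneg _ _ (by linarith) zero_le_one]
      congr 1; ring
    calc (∑' k, u k ^ q.toReal) ^ (1 / q.toReal)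
        ≤ ((∑' i, u i) ^ (q.toReal - 1) * ∑' i, u i) ^ (1 / q.toReal) := by
          refine ENNReal.rpow_le_rpow ?_ (by positivity)
          rw [← ENNReal.tsum_mul_left]
          exact ENNReal.tsum_le_tsum hb
      _ = ((∑' i, u i) ^ q.toReal) ^ (1 / q.toReal) := by rw [key]
      _ = ∑' i, u i := by
          rw [← ENNReal.rpow_mul, mul_one_div_cancel hp.ne', ENNReal.rpow_one]

lemma lnorm_add_le {q : ℝ≥0∞} (hq : 1 ≤ q) (u v : ℕ → ℝ≥0∞) :
    lnorm q (fun k => u k + v k) ≤ lnorm q u + lnorm q v := by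
  rcases eq_or_ne q ⊤ with hqt | hqt
  · simp only [lnorm, if_pos hqt]
    exact iSup_le fun k => add_le_add (le_iSup u k) (le_iSup v k)
  · simp only [lnorm, if_neg hqt]
    have hp1 : 1 ≤ q.toReal := toReal_one_le hq hqt
    have hmeas : ∀ w : ℕ → ℝ≥0∞, AEMeasurable w (Measure.count : Measure ℕ) := fun w =>
      (measurable_of_countable w).aemeasurable
    have h := ENNReal.lintegral_Lp_add_le (μ := (Measure.count : Measure ℕ))
      (hmeas u) (hmeas v) hp1
    simpa [MeasureTheory.lintegral_count] using h

lemma lnorm_schur {q : ℝ≥0∞} (hq : 1 ≤ q) (κ : ℕ → ℕ → ℝ≥0∞) (D : ℝ≥0∞)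
    (hrow : ∀ k, ∑' j, κ k j ≤ D) (hcol : ∀ j, ∑' k, κ k j ≤ D) (u : ℕ → ℝ≥0∞) :
    lnorm q (fun k => ∑' j, κ k j * u j) ≤ D * lnorm q u := by
  rcases eq_or_ne q ⊤ with hqt | hqt
  · simp only [lnorm, if_pos hqt]
    refine iSup_le fun k => ?_
    calc ∑' j, κ k j * u j ≤ ∑' j, κ k j * ⨆ i, u i :=
          ENNReal.tsum_le_tsum fun j => mul_le_mul_right (le_iSup u j) _
      _ = (∑' j, κ k j) * ⨆ i, u i := ENNReal.tsum_mul_right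
      _ ≤ D * ⨆ i, u i := mul_le_mul_left (hrow k) _
  · simp only [lnorm, if_neg hqt]
    have hp1 : 1 ≤ q.toReal := toReal_one_le hq hqt
    have hp : 0 < q.toReal := by linarith
    set p := q.toReal with hp_def
    have key : ∀ k, (∑' j, κ k j * u j) ^ p ≤ D ^ (p - 1) * ∑' j, κ k j * u j ^ p := by
      intro k
      rcases eq_or_lt_of_le hp1 with hp_eq | hp_lt
      · have hp1' : p = 1 := hp_eq.symm
        simp [hp1']
      · have hpq : p.HolderConjugate (Real.conjExponent p) :=
          Real.HolderConjugate.conjExponent hp_lt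
        set p' := Real.conjExponent p with hp'_def
        have hp'pos : 0 < p' := hpq.symm.pos
        have hmeas : ∀ w : ℕ → ℝ≥0∞, AEMeasurable w (Measure.count : Measure ℕ) := fun w =>
          (measurable_of_countable w).aemeasurable
        have hold := ENNReal.lintegral_mul_le_Lp_mul_Lq (Measure.count : Measure ℕ)
          hpq.symm (hmeas (fun j => κ k j ^ (1/p'))) (hmeas (fun j => κ k j ^ (1/p) * u j))
        rw [MeasureTheory.lintegral_count, MeasureTheory.lintegral_count,
          MeasureTheory.lintegral_count] at hold
        have h1 : ∀ j, ((fun j => κ k j ^ (1/p')) * (fun j => κ k j ^ (1/p) * u j)) j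
            = κ k j * u j := by
          intro j
          simp only [Pi.mul_apply]
          rw [← mul_assoc, ← ENNReal.rpow_add_of_nonneg _ _ (by positivity) (by positivity)]
          rw [show 1/p' + 1/p = 1 by
            have := hpq.symm.inv_add_inv_eq_one; rw [one_div, one_div]; linarith]
          rw [ENNReal.rpow_one]
        have h2 : ∀ j, (κ k j ^ (1/p')) ^ p' = κ k j := by
          intro j
          rw [← ENNReal.rpow_mul, one_div, inv_mul_cancel₀ hp'pos.ne', ENNReal.rpow_one]
        have h3 : ∀ j, (κ k j ^ (1/p) * u j) ^ p = κ k j * u j ^ p := by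
          intro j
          rw [ENNReal.mul_rpow_of_nonneg _ _ (by positivity), ← ENNReal.rpow_mul, one_div,
            inv_mul_cancel₀ hp.ne', ENNReal.rpow_one]
        simp only [h1, h2, h3] at hold
        calc (∑' j, κ k j * u j) ^ p
            ≤ ((∑' j, κ k j) ^ (1/p') * (∑' j, κ k j * u j ^ p) ^ (1/p)) ^ p :=
              ENNReal.rpow_le_rpow hold (by positivity)
          _ = ((∑' j, κ k j) ^ (1/p')) ^ p * (((∑' j, κ k j * u j ^ p) ^ (1/p)) ^ p) :=
              ENNReal.mul_rpow_of_nonneg _ _ (by positivity)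
          _ = (∑' j, κ k j) ^ (p - 1) * ∑' j, κ k j * u j ^ p := by
              rw [← ENNReal.rpow_mul, ← ENNReal.rpow_mul, one_div, one_div,
                inv_mul_cancel₀ hp.ne', ENNReal.rpow_one]
              congr 1
              congr 1
              rw [inv_eq_one_div, div_mul_eq_mul_div, one_mul]
              rw [show p / p' = p - 1 from hpq.div_conj_eq_sub_one]
          _ ≤ D ^ (p - 1) * ∑' j, κ k j * u j ^ p :=
              mul_le_mul_left (ENNReal.rpow_le_rpow (hrow k) (by linarith)) _
    have hDp : D ^ (p - 1) * D = D ^ p := by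
      nth_rewrite 2 [← ENNReal.rpow_one D]
      rw [← ENNReal.rpow_add_of_nonneg _ _ (by linarith) zero_le_one]
      congr 1; ring
    calc (∑' k, (∑' j, κ k j * u j) ^ p) ^ (1/p)
        ≤ (∑' k, D ^ (p-1) * ∑' j, κ k j * u j ^ p) ^ (1/p) :=
          ENNReal.rpow_le_rpow (ENNReal.tsum_le_tsum key) (by positivity)
      _ = (D ^ (p-1) * ∑' j, (∑' k, κ k j) * u j ^ p) ^ (1/p) := by
          rw [ENNReal.tsum_mul_left]
          congr 2
          rw [ENNReal.tsum_comm]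
          exact tsum_congr fun j => ENNReal.tsum_mul_right
      _ ≤ (D ^ (p-1) * ∑' j, D * u j ^ p) ^ (1/p) := by
          refine ENNReal.rpow_le_rpow (mul_le_mul_right (ENNReal.tsum_le_tsum fun j =>
            mul_le_mul_left (hcol j) _) _) (by positivity)
      _ = (D ^ p * ∑' j, u j ^ p) ^ (1/p) := by
          rw [ENNReal.tsum_mul_left, ← mul_assoc, hDp]
      _ = D * (∑' j, u j ^ p) ^ (1/p) := by
          rw [ENNReal.mul_rpow_of_nonneg _ _ (by positivity), ← ENNReal.rpow_mul,
            mul_one_div_cancel hp.ne', ENNReal.rpow_one]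

lemma ofReal_rpow_nat (θ : ℝ) (m : ℕ) :
    ENNReal.ofReal ((2:ℝ) ^ (-((m:ℝ) * θ))) = ENNReal.ofReal ((2:ℝ) ^ (-θ)) ^ m := by
  rw [← ENNReal.ofReal_pow (by positivity), ← Real.rpow_natCast ((2:ℝ) ^ (-θ)) m,
    ← Real.rpow_mul (by norm_num : (0:ℝ) ≤ 2)]
  congr 2
  ring

lemma ofReal_shift (c : ℝ) (hc : 0 ≤ c) (θ : ℝ) (m : ℕ) (x y : ℝ)
    (hxy : x = -((m:ℝ) * θ) + y) :
    ENNReal.ofReal ((2:ℝ) ^ x * c)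
      = ENNReal.ofReal ((2:ℝ) ^ (-θ)) ^ m * ENNReal.ofReal ((2:ℝ) ^ y * c) := by
  rw [← ofReal_rpow_nat θ m, ← ENNReal.ofReal_mul (by positivity), ← mul_assoc,
    ← Real.rpow_add two_pos, ← hxy]

lemma ofReal_shift2 (c : ℝ) (hc : 0 ≤ c) (θ : ℝ) (m : ℕ) (x y z : ℝ)
    (h : x + y = -((m:ℝ) * θ) + z) :
    ENNReal.ofReal ((2:ℝ) ^ x) * ENNReal.ofReal ((2:ℝ) ^ y * c)
      = ENNReal.ofReal ((2:ℝ) ^ (-θ)) ^ m * ENNReal.ofReal ((2:ℝ) ^ z * c) := by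
  rw [← ENNReal.ofReal_mul (by positivity), ← mul_assoc, ← Real.rpow_add two_pos]
  exact ofReal_shift c hc θ m (x + y) z h

lemma shift_tsum_eq (F : ℕ → ℝ≥0∞) (m : ℕ) (hF : ∀ j, j < m → F j = 0) :
    ∑' j, F j = ∑' i, F (i + m) := by
  refine (Function.Injective.tsum_eq (add_left_injective m) ?_).symm
  intro j hj
  simp only [Function.mem_support] at hj
  rcases le_or_gt m j with h | h
  · exact ⟨j - m, by simp; omega⟩
  · exact absurd (hF j h) hj

lemma kernel_tsum_le (ρ σ : ℝ≥0∞) (hσ : σ ≤ 1) (k : ℕ) :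
    ∑' j, ρ ^ (j - k) * σ ^ (k - j) ≤ (∑' i, ρ ^ i) + (∑' i, σ ^ i) := by
  have hpoint : ∀ j, ρ ^ (j - k) * σ ^ (k - j) ≤
      (if j < k then 0 else ρ ^ (j - k)) + (if j < k then σ ^ (k - j) else 0) := by
    intro j
    by_cases h : j < k
    · simp only [if_pos h]
      have hj : j - k = 0 := Nat.sub_eq_zero_of_le h.le
      rw [hj, pow_zero, one_mul, zero_add]
    · simp only [if_neg h]
      have hj : k - j = 0 := Nat.sub_eq_zero_of_le (not_lt.1 h)
      rw [hj, pow_zero, mul_one, add_zero]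
  calc ∑' j, ρ ^ (j - k) * σ ^ (k - j)
      ≤ ∑' j, ((if j < k then 0 else ρ ^ (j-k)) + (if j < k then σ ^ (k-j) else 0)) :=
        ENNReal.tsum_le_tsum hpoint
    _ = (∑' j, (if j < k then 0 else ρ ^ (j-k))) + ∑' j, (if j < k then σ ^ (k-j) else 0) :=
        ENNReal.tsum_add
    _ ≤ (∑' i, ρ ^ i) + (∑' i, σ ^ i) := by
        refine add_le_add ?_ ?_
        · rw [shift_tsum_eq _ k (fun j hj => if_pos hj)]
          refine le_of_eq (tsum_congr fun i => ?_)
          rw [if_neg (by omega), Nat.add_sub_cancel]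
        · rw [tsum_eq_sum (s := Finset.range k)
            (fun b hb => if_neg (by simpa using hb))]
          have h3 : ∑ j ∈ Finset.range k, (if j < k then σ ^ (k-j) else 0)
              = ∑ j ∈ Finset.range k, σ ^ (k-j) :=
            Finset.sum_congr rfl fun j hj => if_pos (Finset.mem_range.1 hj)
          rw [h3, ← Finset.sum_range_reflect (fun j => σ ^ (k-j)) k]
          calc ∑ j ∈ Finset.range k, σ ^ (k - (k - 1 - j))
              ≤ ∑ j ∈ Finset.range k, σ ^ j := by
                refine Finset.sum_le_sum fun j hj => ?_
                have hjk : j < k := Finset.mem_range.1 hj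
                have he : k - (k - 1 - j) = j + 1 := by omega
                rw [he]
                exact pow_le_pow_right_of_le_one' hσ (by omega)
            _ ≤ ∑' i, σ ^ i := ENNReal.sum_le_tsum _

end Helpers

set_option maxHeartbeats 2000000

/-- Theorem 3.1 (continuity part): if `Φ : B_{s,q}(0,r) ⊆ Σ^s_q(E) → Σ^{s₀}_∞(F)`
satisfies the weak Lipschitz estimate and the tame estimate, then
`Φ : B_{s,q}(0,r) → Σ^s_q(F)` is continuous for the distances induced by the
pseudo-norms `‖·‖_{Σ^s_q(E)}` and `‖·‖_{Σ^s_q(F)}`. -/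
theorem continuity_of_weakLipschitz_tame
    {E F : Type*} [AddCommGroup E] [Module ℝ E] [AddCommGroup F] [Module ℝ F]
    (NE : E → ℝ) (NF : F → ℝ) (hNE : IsPseudoNorm NE) (hNF : IsPseudoNorm NF)
    (s₀ s s₁ : ℝ) (hs₀ : s₀ < s) (hs₁ : s < s₁)
    (q : ℝ≥0∞) (hq : 1 ≤ q) (r : ℝ) (hr : 0 < r)
    (Φ : (ℕ → E) → (ℕ → F))
    -- Φ maps the ball B_{s,q}(0,r) into Σ^{s₀}_∞(F)
    (hΦmem : ∀ v, memSigma NE s q v → sigmaNorm NE s q v < ENNReal.ofReal r →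
      memSigma NF s₀ ⊤ (Φ v))
    -- weak Lipschitz estimate
    (C₀ : ℝ) (hC₀ : 0 < C₀)
    (hlip : ∀ v w, memSigma NE s q v → sigmaNorm NE s q v < ENNReal.ofReal r →
      memSigma NE s q w → sigmaNorm NE s q w < ENNReal.ofReal r →
      sigmaNorm NF s₀ ⊤ (Φ v - Φ w) ≤ ENNReal.ofReal C₀ * sigmaNorm NE s₀ 1 (v - w))
    -- tame estimate, for v ∈ Σ^∞_1(E) ∩ B_{s,q}(0,r)
    (C₁ : ℝ) (hC₁ : 0 < C₁)
    (htame : ∀ v, (∀ σ : ℝ, memSigma NE σ 1 v) →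
      memSigma NE s q v → sigmaNorm NE s q v < ENNReal.ofReal r →
      sigmaNorm NF s₁ ⊤ (Φ v) ≤ ENNReal.ofReal C₁ * sigmaNorm NE s₁ 1 v) :
    -- continuity of Φ : B_{s,q}(0,r) → Σ^s_q(F)
    ∀ f, memSigma NE s q f → sigmaNorm NE s q f < ENNReal.ofReal r →
      ∀ ε : ℝ, 0 < ε → ∃ δ : ℝ, 0 < δ ∧
        ∀ g, memSigma NE s q g → sigmaNorm NE s q g < ENNReal.ofReal r →
          sigmaNorm NE s q (g - f) < ENNReal.ofReal δ →
          sigmaNorm NF s q (Φ g - Φ f) < ENNReal.ofReal ε := by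
  classical
  intro f hf hfr ε hε
  have hα : (0:ℝ) < s - s₀ := sub_pos.mpr hs₀
  have hβ : (0:ℝ) < s₁ - s := sub_pos.mpr hs₁
  set ρa : ℝ≥0∞ := ENNReal.ofReal ((2:ℝ) ^ (-(s - s₀))) with hρa_def
  set ρb : ℝ≥0∞ := ENNReal.ofReal ((2:ℝ) ^ (-(s₁ - s))) with hρb_def
  have hρa1 : ρa < 1 := by
    rw [hρa_def, ENNReal.ofReal_lt_one]
    exact Real.rpow_lt_one_of_one_lt_of_neg one_lt_two (by linarith)
  have hρb1 : ρb < 1 := by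
    rw [hρb_def, ENNReal.ofReal_lt_one]
    exact Real.rpow_lt_one_of_one_lt_of_neg one_lt_two (by linarith)
  set ca : ℝ≥0∞ := ∑' i : ℕ, ρa ^ i with hca_def
  set cb : ℝ≥0∞ := ∑' i : ℕ, ρb ^ i with hcb_def
  have hca_ne : ca ≠ ⊤ := by
    rw [hca_def, ENNReal.tsum_geometric]
    exact (ENNReal.inv_lt_top.mpr (tsub_pos_of_lt hρa1)).ne
  have hcb_ne : cb ≠ ⊤ := by
    rw [hcb_def, ENNReal.tsum_geometric]
    exact (ENNReal.inv_lt_top.mpr (tsub_pos_of_lt hρb1)).ne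
  have hca_pos : (1:ℝ≥0∞) ≤ ca := by
    rw [hca_def]
    simpa using ENNReal.le_tsum (f := fun i : ℕ => ρa ^ i) 0
  -- termwise bound for the Σ^s_q norm
  have hterm : ∀ (v : ℕ → E) (j : ℕ),
      ENNReal.ofReal ((2:ℝ) ^ ((j:ℝ) * s) * NE (v j)) ≤ sigmaNorm NE s q v := by
    intro v j
    rw [sigmaNorm_eq_lnorm]
    exact le_lnorm hq _ j
  have hN0 : NE (0 : E) = 0 := (hNE.eq_zero_iff 0).mpr rfl
  -- smoothing facts
  have hS_le : ∀ (n : ℕ) (v : ℕ → E), sigmaNorm NE s q (smoothS n v) ≤ sigmaNorm NE s q v := by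
    intro n v
    rw [sigmaNorm_eq_lnorm, sigmaNorm_eq_lnorm]
    refine lnorm_mono q fun j => ?_
    by_cases hj : j ≤ n
    · simp [smoothS, hj]
    · simp [smoothS, hj, hN0]
  have hS_ball : ∀ (n : ℕ) (v : ℕ → E), sigmaNorm NE s q v < ENNReal.ofReal r →
      sigmaNorm NE s q (smoothS n v) < ENNReal.ofReal r :=
    fun n v hv => lt_of_le_of_lt (hS_le n v) hv
  have hS_mem : ∀ (n : ℕ) (v : ℕ → E), memSigma NE s q v → memSigma NE s q (smoothS n v) := by
    intro n v hv
    unfold memSigma at hv ⊢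
    rcases eq_or_ne q ⊤ with hqt | hqt
    · rw [if_pos hqt] at hv ⊢
      refine Tendsto.congr' ?_ tendsto_const_nhds
      filter_upwards [eventually_ge_atTop (n+1)] with k hk
      have hkn : ¬ k ≤ n := by omega
      simp only [smoothS, if_neg hkn, hN0, mul_zero]
    · rw [if_neg hqt] at hv ⊢
      exact lt_of_le_of_lt (hS_le n v) hv
  have hS_sig : ∀ (n : ℕ) (v : ℕ → E) (σ : ℝ), memSigma NE σ 1 (smoothS n v) := by
    intro n v σ
    unfold memSigma
    rw [if_neg (by simp : (1:ℝ≥0∞) ≠ ⊤)]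
    have h1 : sigmaNorm NE σ 1 (smoothS n v)
        = ∑ j ∈ Finset.range (n+1), ENNReal.ofReal ((2:ℝ) ^ ((j:ℝ) * σ) * NE (smoothS n v j)) := by
      rw [sigmaNorm_one_eq]
      refine tsum_eq_sum fun b hb => ?_
      have hb' : ¬ b ≤ n := by simpa [Nat.lt_succ_iff] using hb
      simp [smoothS, hb', hN0]
    rw [h1]
    exact ENNReal.sum_lt_top.mpr fun j _ => ENNReal.ofReal_lt_top
  -- basic single-term comparison against the sup norm
  have hble : ∀ (t : ℝ) (w : ℕ → F) (k : ℕ),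
      ENNReal.ofReal ((2:ℝ) ^ ((k:ℝ) * s) * NF (w k)) ≤
        ENNReal.ofReal ((2:ℝ) ^ ((k:ℝ) * (s - t))) * sigmaNorm NF t ⊤ w := by
    intro t w k
    rw [show (k:ℝ) * s = (k:ℝ) * (s - t) + (k:ℝ) * t from by ring,
      Real.rpow_add two_pos, mul_assoc,
      ENNReal.ofReal_mul (by positivity), sigmaNorm_top_eq]
    exact mul_le_mul_right
      (le_iSup (fun k : ℕ => ENNReal.ofReal ((2:ℝ) ^ ((k:ℝ) * t) * NF (w k))) k) _
  -- conversion identities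
  have hconv0 : ∀ (v : ℕ → E) (j : ℕ),
      ENNReal.ofReal ((2:ℝ) ^ ((j:ℝ) * s₀) * NE (v j))
        = ρa ^ j * ENNReal.ofReal ((2:ℝ) ^ ((j:ℝ) * s) * NE (v j)) := by
    intro v j
    rw [hρa_def]
    exact ofReal_shift _ (hNE.nonneg _) (s - s₀) j _ _ (by ring)
  have hconv2 : ∀ (v : ℕ → E) (j k : ℕ), k ≤ j →
      ENNReal.ofReal ((2:ℝ) ^ ((k:ℝ) * (s - s₀))) * ENNReal.ofReal ((2:ℝ) ^ ((j:ℝ) * s₀) * NE (v j))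
        = ρa ^ (j - k) * ENNReal.ofReal ((2:ℝ) ^ ((j:ℝ) * s) * NE (v j)) := by
    intro v j k hkj
    rw [hρa_def]
    exact ofReal_shift2 _ (hNE.nonneg _) (s - s₀) (j - k) _ _ _
      (by rw [Nat.cast_sub hkj]; ring)
  have hconv1 : ∀ (v : ℕ → E) (j k : ℕ), j ≤ k →
      ENNReal.ofReal ((2:ℝ) ^ ((k:ℝ) * (s - s₁))) * ENNReal.ofReal ((2:ℝ) ^ ((j:ℝ) * s₁) * NE (v j))
        = ρb ^ (k - j) * ENNReal.ofReal ((2:ℝ) ^ ((j:ℝ) * s) * NE (v j)) := by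
    intro v j k hjk
    rw [hρb_def]
    exact ofReal_shift2 _ (hNE.nonneg _) (s₁ - s) (k - j) _ _ _
      (by rw [Nat.cast_sub hjk]; ring)
  -- the kernel
  set Cm : ℝ≥0∞ := ENNReal.ofReal C₀ + ENNReal.ofReal C₁ with hCm_def
  have hCm_ne : Cm ≠ ⊤ := by
    rw [hCm_def]
    exact ENNReal.add_ne_top.mpr ⟨ENNReal.ofReal_ne_top, ENNReal.ofReal_ne_top⟩
  set κ : ℕ → ℕ → ℝ≥0∞ := fun k j => Cm * (ρa ^ (j - k) * ρb ^ (k - j)) with hκ_def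
  set D : ℝ≥0∞ := Cm * (ca + cb) with hD_def
  have hD_ne : D ≠ ⊤ := by
    rw [hD_def]
    exact ENNReal.mul_ne_top hCm_ne (ENNReal.add_ne_top.mpr ⟨hca_ne, hcb_ne⟩)
  have hrow : ∀ k, ∑' j, κ k j ≤ D := by
    intro k
    simp only [hκ_def]
    calc ∑' j, Cm * (ρa ^ (j-k) * ρb ^ (k-j)) = Cm * ∑' j, ρa ^ (j-k) * ρb ^ (k-j) :=
          ENNReal.tsum_mul_left
      _ ≤ Cm * (ca + cb) := mul_le_mul_right (kernel_tsum_le ρa ρb hρb1.le k) _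
      _ = D := hD_def.symm
  have hcol : ∀ j, ∑' k, κ k j ≤ D := by
    intro j
    simp only [hκ_def]
    calc ∑' k, Cm * (ρa ^ (j-k) * ρb ^ (k-j)) = Cm * ∑' k, ρa ^ (j-k) * ρb ^ (k-j) :=
          ENNReal.tsum_mul_left
      _ ≤ Cm * (cb + ca) := by
          refine mul_le_mul_right ?_ _
          calc ∑' k, ρa ^ (j-k) * ρb ^ (k-j) = ∑' k, ρb ^ (k-j) * ρa ^ (j-k) :=
                tsum_congr fun k => mul_comm _ _
            _ ≤ cb + ca := kernel_tsum_le ρb ρa hρa1.le j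
      _ = D := by rw [hD_def, add_comm cb ca]
  -- tail estimate for f
  have htail : ∀ η : ℝ, 0 < η → ∃ M : ℕ,
      lnorm q (fun j => if j ≤ M then 0
        else ENNReal.ofReal ((2:ℝ) ^ ((j:ℝ) * s) * NE (f j))) ≤ ENNReal.ofReal η := by
    intro η hη
    rcases eq_or_ne q ⊤ with hqt | hqt
    · unfold memSigma at hf
      rw [if_pos hqt] at hf
      obtain ⟨M, hM⟩ := eventually_atTop.1 (hf.eventually_lt_const hη)
      refine ⟨M, ?_⟩
      simp only [lnorm, if_pos hqt]
      refine iSup_le fun j => ?_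
      by_cases hj : j ≤ M
      · simp [hj]
      · rw [if_neg hj]
        exact ENNReal.ofReal_le_ofReal (hM j (by omega)).le
    · unfold memSigma at hf
      rw [if_neg hqt] at hf
      have hp1 : 1 ≤ q.toReal := toReal_one_le hq hqt
      have hp : 0 < q.toReal := by linarith
      set G : ℕ → ℝ≥0∞ := fun j =>
        ENNReal.ofReal ((2:ℝ) ^ ((j:ℝ) * s) * NE (f j)) ^ q.toReal with hG_def
      have hS_ne : (∑' j, G j) ≠ ⊤ := by
        intro hcon
        rw [sigmaNorm_eq_lnorm] at hf
        simp only [lnorm, if_neg hqt] at hf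
        rw [show (∑' (k : ℕ), ENNReal.ofReal ((2:ℝ) ^ ((k:ℝ) * s) * NE (f k)) ^ q.toReal)
            = ⊤ from hcon, ENNReal.top_rpow_of_pos (by positivity)] at hf
        exact absurd hf (lt_irrefl ⊤)
      have htendG := ENNReal.tendsto_sum_nat_add G hS_ne
      have hpos : (0:ℝ≥0∞) < ENNReal.ofReal η ^ q.toReal :=
        ENNReal.rpow_pos (ENNReal.ofReal_pos.mpr hη) ENNReal.ofReal_ne_top
      obtain ⟨M, hM⟩ := eventually_atTop.1 (htendG.eventually_lt_const hpos)
      refine ⟨M, ?_⟩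
      simp only [lnorm, if_neg hqt]
      have hre : (∑' j, (if j ≤ M then (0:ℝ≥0∞)
            else ENNReal.ofReal ((2:ℝ) ^ ((j:ℝ) * s) * NE (f j))) ^ q.toReal)
          = ∑' i, G (i + (M+1)) := by
        have h1 : ∀ j, (if j ≤ M then (0:ℝ≥0∞)
            else ENNReal.ofReal ((2:ℝ) ^ ((j:ℝ) * s) * NE (f j))) ^ q.toReal
            = (if j ≤ M then 0 else G j) := by
          intro j
          by_cases hj : j ≤ M
          · simp [hj, ENNReal.zero_rpow_of_pos hp]
          · simp [hj, hG_def]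
        rw [tsum_congr h1,
          shift_tsum_eq (fun j => if j ≤ M then 0 else G j) (M+1) (fun j hj => if_pos (by omega))]
        exact tsum_congr fun i => if_neg (by omega)
      rw [hre]
      calc (∑' i, G (i + (M+1))) ^ (1/q.toReal)
          ≤ (ENNReal.ofReal η ^ q.toReal) ^ (1/q.toReal) :=
            ENNReal.rpow_le_rpow (hM (M+1) (by omega)).le (by positivity)
        _ = ENNReal.ofReal η := by
            rw [← ENNReal.rpow_mul, mul_one_div_cancel hp.ne', ENNReal.rpow_one]
  -- choose M
  set η₁ : ℝ := (ε/4) / (2 * D.toReal + 1) with hη₁_def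
  have hDt_nonneg : (0:ℝ) ≤ D.toReal := ENNReal.toReal_nonneg
  have hη₁pos : 0 < η₁ := by
    rw [hη₁_def]
    positivity
  obtain ⟨M, hM⟩ := htail η₁ hη₁pos
  have hu3target : 2 * D * ENNReal.ofReal η₁ ≤ ENNReal.ofReal (ε/4) := by
    have h2D : 2 * D ≤ ENNReal.ofReal (2 * D.toReal + 1) := by
      calc 2 * D = ENNReal.ofReal (2 * D.toReal) := by
            rw [ENNReal.ofReal_mul (by norm_num), ENNReal.ofReal_toReal hD_ne]
            norm_num
        _ ≤ ENNReal.ofReal (2 * D.toReal + 1) := ENNReal.ofReal_le_ofReal (by linarith)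
    calc 2 * D * ENNReal.ofReal η₁ ≤ ENNReal.ofReal (2 * D.toReal + 1) * ENNReal.ofReal η₁ :=
          mul_le_mul_left h2D _
      _ = ENNReal.ofReal ((2 * D.toReal + 1) * η₁) :=
          (ENNReal.ofReal_mul (by linarith)).symm
      _ = ENNReal.ofReal (ε/4) := by
          rw [hη₁_def, mul_div_cancel₀ _ (by linarith : 2 * D.toReal + 1 ≠ 0)]
  -- choose K
  set G4 : ℝ≥0∞ := 2 * Cm * ENNReal.ofReal r * ((M:ℝ≥0∞) + 1) * cb with hG4_def
  have hG4_ne : G4 ≠ ⊤ := by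
    rw [hG4_def]
    refine ENNReal.mul_ne_top (ENNReal.mul_ne_top (ENNReal.mul_ne_top
      (ENNReal.mul_ne_top ENNReal.ofNat_ne_top hCm_ne) ENNReal.ofReal_ne_top) ?_) hcb_ne
    exact ENNReal.add_ne_top.mpr ⟨ENNReal.natCast_ne_top M, ENNReal.one_ne_top⟩
  have htpos : (0:ℝ≥0∞) < ENNReal.ofReal (ε/4) / (G4 + 1) :=
    ENNReal.div_pos (ENNReal.ofReal_pos.mpr (by linarith)).ne'
      (ENNReal.add_ne_top.mpr ⟨hG4_ne, ENNReal.one_ne_top⟩)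
  obtain ⟨n₀, hn₀⟩ := eventually_atTop.1
    ((ENNReal.tendsto_pow_atTop_nhds_zero_of_lt_one hρb1).eventually_lt_const htpos)
  set K : ℕ := M + n₀ with hK_def
  -- choose δ
  set cK : ℝ≥0∞ := ENNReal.ofReal ((2:ℝ) ^ ((K:ℝ) * (s - s₀))) * ENNReal.ofReal C₀ * ca
    with hcK_def
  set A : ℝ≥0∞ := ((K:ℝ≥0∞) + 1) * cK + D with hA_def
  have hcK_ne : cK ≠ ⊤ := by
    rw [hcK_def]
    exact ENNReal.mul_ne_top (ENNReal.mul_ne_top ENNReal.ofReal_ne_top ENNReal.ofReal_ne_top)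
      hca_ne
  have hA_ne : A ≠ ⊤ := by
    rw [hA_def]
    refine ENNReal.add_ne_top.mpr ⟨ENNReal.mul_ne_top ?_ hcK_ne, hD_ne⟩
    exact ENNReal.add_ne_top.mpr ⟨ENNReal.natCast_ne_top K, ENNReal.one_ne_top⟩
  have hcK_pos : (0:ℝ≥0∞) < cK := by
    rw [hcK_def]
    refine ENNReal.mul_pos (ENNReal.mul_pos ?_ ?_).ne' (by
      intro h; rw [h] at hca_pos; simpa using hca_pos)
    · exact (ENNReal.ofReal_pos.mpr (by positivity)).ne'
    · exact (ENNReal.ofReal_pos.mpr hC₀).ne'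
  have hA_pos : A ≠ 0 := by
    rw [hA_def]
    intro h
    rw [add_eq_zero] at h
    have h1 := h.1
    rw [mul_eq_zero] at h1
    rcases h1 with h1 | h1
    · simp at h1
    · exact hcK_pos.ne' h1
  set δ : ℝ := (ε/2) / (A.toReal + 1) with hδ_def
  have hAt_nonneg : (0:ℝ) ≤ A.toReal := ENNReal.toReal_nonneg
  refine ⟨δ, by rw [hδ_def]; positivity, ?_⟩
  intro g hg hgr hgf
  -- the four pieces
  set W : ℝ≥0∞ := sigmaNorm NE s q (g - f) with hW_def
  set af : ℕ → ℝ≥0∞ := fun j => ENNReal.ofReal ((2:ℝ) ^ ((j:ℝ) * s) * NE (f j)) with haf_def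
  set ag : ℕ → ℝ≥0∞ := fun j => ENNReal.ofReal ((2:ℝ) ^ ((j:ℝ) * s) * NE (g j)) with hag_def
  set ad : ℕ → ℝ≥0∞ := fun j => ENNReal.ofReal ((2:ℝ) ^ ((j:ℝ) * s) * NE ((g - f) j)) with had_def
  have had_le : ∀ j, ad j ≤ W := fun j => hterm (g - f) j
  have haf_le : ∀ j, af j ≤ ENNReal.ofReal r := fun j => ((hterm f j).trans_lt hfr).le
  have hag_split : ∀ j, ag j ≤ ad j + af j := by
    intro j
    have h1 : NE (g j) ≤ NE ((g - f) j) + NE (f j) := by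
      have h2 := hNE.add_le ((g - f) j) (f j)
      have h3 : (g - f) j + f j = g j := by simp [Pi.sub_apply]
      rw [h3] at h2
      exact h2
    calc ag j = ENNReal.ofReal ((2:ℝ) ^ ((j:ℝ) * s) * NE (g j)) := rfl
      _ ≤ ENNReal.ofReal ((2:ℝ) ^ ((j:ℝ) * s) * NE ((g - f) j)
            + (2:ℝ) ^ ((j:ℝ) * s) * NE (f j)) := by
          refine ENNReal.ofReal_le_ofReal ?_
          rw [← mul_add]
          exact mul_le_mul_of_nonneg_left h1 (by positivity)
      _ = ad j + af j :=
          ENNReal.ofReal_add (mul_nonneg (by positivity) (hNE.nonneg _))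
            (mul_nonneg (by positivity) (hNE.nonneg _))
  -- low-frequency pointwise bound
  have hΦlip := hlip g f hg hgr hf hfr
  have hs0le : sigmaNorm NE s₀ 1 (g - f) ≤ ca * W := by
    rw [sigmaNorm_one_eq]
    calc ∑' (j : ℕ), ENNReal.ofReal ((2:ℝ) ^ ((j:ℝ) * s₀) * NE ((g - f) j))
        = ∑' j, ρa ^ j * ad j := tsum_congr fun j => hconv0 (g - f) j
      _ ≤ ∑' j, ρa ^ j * W := ENNReal.tsum_le_tsum fun j => mul_le_mul_right (had_le j) _
      _ = ca * W := by rw [ENNReal.tsum_mul_right, hca_def]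
  have hlowk : ∀ k : ℕ, k ≤ K →
      ENNReal.ofReal ((2:ℝ) ^ ((k:ℝ) * s) * NF ((Φ g - Φ f) k)) ≤ cK * W := by
    intro k hk
    calc ENNReal.ofReal ((2:ℝ) ^ ((k:ℝ) * s) * NF ((Φ g - Φ f) k))
        ≤ ENNReal.ofReal ((2:ℝ) ^ ((k:ℝ) * (s - s₀))) * sigmaNorm NF s₀ ⊤ (Φ g - Φ f) :=
          hble s₀ (Φ g - Φ f) k
      _ ≤ ENNReal.ofReal ((2:ℝ) ^ ((K:ℝ) * (s - s₀)))
            * (ENNReal.ofReal C₀ * sigmaNorm NE s₀ 1 (g - f)) := by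
          refine mul_le_mul' ?_ hΦlip
          refine ENNReal.ofReal_le_ofReal ?_
          refine Real.rpow_le_rpow_of_exponent_le one_le_two ?_
          have : (k:ℝ) ≤ (K:ℝ) := Nat.cast_le.mpr hk
          nlinarith
      _ ≤ ENNReal.ofReal ((2:ℝ) ^ ((K:ℝ) * (s - s₀))) * (ENNReal.ofReal C₀ * (ca * W)) :=
          mul_le_mul_right (mul_le_mul_right hs0le _) _
      _ = cK * W := by rw [hcK_def]; ring
  -- high-frequency pointwise bound
  have hhigh : ∀ k : ℕ,
      ENNReal.ofReal ((2:ℝ) ^ ((k:ℝ) * s) * NF ((Φ g - Φ f) k))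
        ≤ (∑' j, κ k j * ad j) + (∑' j, κ k j * (2 * af j)) := by
    intro k
    set m : ℕ := k - 1 with hm_def
    set G' : ℕ → E := smoothS m g with hG'_def
    set F' : ℕ → E := smoothS m f with hF'_def
    have hGmem := hS_mem m g hg
    have hGball := hS_ball m g hgr
    have hFmem := hS_mem m f hf
    have hFball := hS_ball m f hfr
    -- triangle inequality
    have htri : NF ((Φ g - Φ f) k) ≤ NF ((Φ g - Φ G') k)
        + (NF ((Φ G' - Φ F') k) + NF ((Φ F' - Φ f) k)) := by
      have h1 : (Φ g - Φ f) k = ((Φ g - Φ G') k) + (((Φ G' - Φ F') k) + ((Φ F' - Φ f) k)) := by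
        simp only [Pi.sub_apply]
        abel
      rw [h1]
      exact le_trans (hNF.add_le _ _) (add_le_add_right (hNF.add_le _ _) _)
    have hsum : ENNReal.ofReal ((2:ℝ) ^ ((k:ℝ) * s) * NF ((Φ g - Φ f) k)) ≤
        ENNReal.ofReal ((2:ℝ) ^ ((k:ℝ) * s) * NF ((Φ g - Φ G') k))
        + (ENNReal.ofReal ((2:ℝ) ^ ((k:ℝ) * s) * NF ((Φ G' - Φ F') k))
          + ENNReal.ofReal ((2:ℝ) ^ ((k:ℝ) * s) * NF ((Φ F' - Φ f) k))) := by
      rw [← ENNReal.ofReal_add (mul_nonneg (by positivity) (hNF.nonneg _))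
          (mul_nonneg (by positivity) (hNF.nonneg _)),
        ← ENNReal.ofReal_add (mul_nonneg (by positivity) (hNF.nonneg _))
          (add_nonneg (mul_nonneg (by positivity) (hNF.nonneg _))
            (mul_nonneg (by positivity) (hNF.nonneg _))),
        ← mul_add, ← mul_add]
      exact ENNReal.ofReal_le_ofReal (mul_le_mul_of_nonneg_left htri (by positivity))
    -- the index comparison
    have hjm : ∀ j : ℕ, ¬ j ≤ m → k ≤ j := by
      intro j hj
      omega
    -- T1
    have hT1 : ENNReal.ofReal ((2:ℝ) ^ ((k:ℝ) * s) * NF ((Φ g - Φ G') k))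
        ≤ ENNReal.ofReal C₀ * ∑' j, (ρa ^ (j - k) * ρb ^ (k - j)) * ag j := by
      have hsplit : ∀ j, (g - G') j = if j ≤ m then 0 else g j := by
        intro j
        by_cases hj : j ≤ m <;> simp [hG'_def, smoothS, hj, Pi.sub_apply]
      calc ENNReal.ofReal ((2:ℝ) ^ ((k:ℝ) * s) * NF ((Φ g - Φ G') k))
          ≤ ENNReal.ofReal ((2:ℝ) ^ ((k:ℝ) * (s - s₀))) * sigmaNorm NF s₀ ⊤ (Φ g - Φ G') :=
            hble s₀ _ k
        _ ≤ ENNReal.ofReal ((2:ℝ) ^ ((k:ℝ) * (s - s₀)))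
              * (ENNReal.ofReal C₀ * sigmaNorm NE s₀ 1 (g - G')) :=
            mul_le_mul_right (hlip g G' hg hgr hGmem hGball) _
        _ = ENNReal.ofReal C₀ * ∑' (j : ℕ), ENNReal.ofReal ((2:ℝ) ^ ((k:ℝ) * (s - s₀)))
              * ENNReal.ofReal ((2:ℝ) ^ ((j:ℝ) * s₀) * NE ((g - G') j)) := by
            rw [sigmaNorm_one_eq, mul_left_comm, ← ENNReal.tsum_mul_left]
        _ ≤ ENNReal.ofReal C₀ * ∑' j, (ρa ^ (j - k) * ρb ^ (k - j)) * ag j := by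
            refine mul_le_mul_right (ENNReal.tsum_le_tsum fun j => ?_) _
            by_cases hj : j ≤ m
            · rw [hsplit j, if_pos hj]
              simp [hN0]
            · have hkj : k ≤ j := hjm j hj
              rw [hsplit j, if_neg hj, hconv2 g j k hkj,
                Nat.sub_eq_zero_of_le hkj, pow_zero, mul_one]
    -- T3
    have hT3 : ENNReal.ofReal ((2:ℝ) ^ ((k:ℝ) * s) * NF ((Φ F' - Φ f) k))
        ≤ ENNReal.ofReal C₀ * ∑' j, (ρa ^ (j - k) * ρb ^ (k - j)) * af j := by
      have hsplit : ∀ j, NE ((F' - f) j) = if j ≤ m then 0 else NE (f j) := by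
        intro j
        by_cases hj : j ≤ m
        · simp [hF'_def, smoothS, hj, Pi.sub_apply, hN0]
        · have : (F' - f) j = -(f j) := by simp [hF'_def, smoothS, hj, Pi.sub_apply]
          rw [this, hNE.neg, if_neg hj]
      calc ENNReal.ofReal ((2:ℝ) ^ ((k:ℝ) * s) * NF ((Φ F' - Φ f) k))
          ≤ ENNReal.ofReal ((2:ℝ) ^ ((k:ℝ) * (s - s₀))) * sigmaNorm NF s₀ ⊤ (Φ F' - Φ f) :=
            hble s₀ _ k
        _ ≤ ENNReal.ofReal ((2:ℝ) ^ ((k:ℝ) * (s - s₀)))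
              * (ENNReal.ofReal C₀ * sigmaNorm NE s₀ 1 (F' - f)) :=
            mul_le_mul_right (hlip F' f hFmem hFball hf hfr) _
        _ = ENNReal.ofReal C₀ * ∑' (j : ℕ), ENNReal.ofReal ((2:ℝ) ^ ((k:ℝ) * (s - s₀)))
              * ENNReal.ofReal ((2:ℝ) ^ ((j:ℝ) * s₀) * NE ((F' - f) j)) := by
            rw [sigmaNorm_one_eq, mul_left_comm, ← ENNReal.tsum_mul_left]
        _ ≤ ENNReal.ofReal C₀ * ∑' j, (ρa ^ (j - k) * ρb ^ (k - j)) * af j := by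
            refine mul_le_mul_right (ENNReal.tsum_le_tsum fun j => ?_) _
            by_cases hj : j ≤ m
            · rw [hsplit j, if_pos hj]
              simp
            · have hkj : k ≤ j := hjm j hj
              rw [hsplit j, if_neg hj, hconv2 f j k hkj,
                Nat.sub_eq_zero_of_le hkj, pow_zero, mul_one]
    -- T2
    have hT2 : ENNReal.ofReal ((2:ℝ) ^ ((k:ℝ) * s) * NF ((Φ G' - Φ F') k))
        ≤ ENNReal.ofReal C₁ * ((∑' j, (ρa ^ (j - k) * ρb ^ (k - j)) * ag j)
          + ∑' j, (ρa ^ (j - k) * ρb ^ (k - j)) * af j) := by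
      have htri2 : NF ((Φ G' - Φ F') k) ≤ NF (Φ G' k) + NF (Φ F' k) := by
        have h1 : (Φ G' - Φ F') k = Φ G' k + -(Φ F' k) := by
          simp [Pi.sub_apply, sub_eq_add_neg]
        rw [h1]
        refine le_trans (hNF.add_le _ _) ?_
        rw [hNF.neg]
      have hstep : ENNReal.ofReal ((2:ℝ) ^ ((k:ℝ) * s) * NF ((Φ G' - Φ F') k)) ≤
          ENNReal.ofReal ((2:ℝ) ^ ((k:ℝ) * s) * NF (Φ G' k))
          + ENNReal.ofReal ((2:ℝ) ^ ((k:ℝ) * s) * NF (Φ F' k)) := by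
        rw [← ENNReal.ofReal_add (mul_nonneg (by positivity) (hNF.nonneg _))
            (mul_nonneg (by positivity) (hNF.nonneg _)), ← mul_add]
        exact ENNReal.ofReal_le_ofReal (mul_le_mul_of_nonneg_left htri2 (by positivity))
      have hpiece : ∀ (v : ℕ → E) (av : ℕ → ℝ≥0∞)
          (hv1 : ∀ σ : ℝ, memSigma NE σ 1 (smoothS m v))
          (hv2 : memSigma NE s q (smoothS m v))
          (hv3 : sigmaNorm NE s q (smoothS m v) < ENNReal.ofReal r)
          (hav : ∀ j, av j = ENNReal.ofReal ((2:ℝ) ^ ((j:ℝ) * s) * NE (v j))),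
          ENNReal.ofReal ((2:ℝ) ^ ((k:ℝ) * s) * NF (Φ (smoothS m v) k))
            ≤ ENNReal.ofReal C₁ * ∑' j, (ρa ^ (j - k) * ρb ^ (k - j)) * av j := by
        intro v av hv1 hv2 hv3 hav
        calc ENNReal.ofReal ((2:ℝ) ^ ((k:ℝ) * s) * NF (Φ (smoothS m v) k))
            ≤ ENNReal.ofReal ((2:ℝ) ^ ((k:ℝ) * (s - s₁))) * sigmaNorm NF s₁ ⊤ (Φ (smoothS m v)) :=
              hble s₁ _ k
          _ ≤ ENNReal.ofReal ((2:ℝ) ^ ((k:ℝ) * (s - s₁)))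
                * (ENNReal.ofReal C₁ * sigmaNorm NE s₁ 1 (smoothS m v)) :=
              mul_le_mul_right (htame (smoothS m v) hv1 hv2 hv3) _
          _ = ENNReal.ofReal C₁ * ∑' (j : ℕ), ENNReal.ofReal ((2:ℝ) ^ ((k:ℝ) * (s - s₁)))
                * ENNReal.ofReal ((2:ℝ) ^ ((j:ℝ) * s₁) * NE (smoothS m v j)) := by
              rw [sigmaNorm_one_eq, mul_left_comm, ← ENNReal.tsum_mul_left]
          _ ≤ ENNReal.ofReal C₁ * ∑' j, (ρa ^ (j - k) * ρb ^ (k - j)) * av j := by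
              refine mul_le_mul_right (ENNReal.tsum_le_tsum fun j => ?_) _
              by_cases hj : j ≤ m
              · have hjk : j ≤ k := by omega
                have hsm : smoothS m v j = v j := by simp [smoothS, hj]
                rw [hsm, hconv1 v j k hjk, hav j,
                  Nat.sub_eq_zero_of_le hjk, pow_zero, one_mul]
              · have hsm : smoothS m v j = 0 := by simp [smoothS, hj]
                rw [hsm]
                simp [hN0]
      calc ENNReal.ofReal ((2:ℝ) ^ ((k:ℝ) * s) * NF ((Φ G' - Φ F') k))
          ≤ ENNReal.ofReal ((2:ℝ) ^ ((k:ℝ) * s) * NF (Φ G' k))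
            + ENNReal.ofReal ((2:ℝ) ^ ((k:ℝ) * s) * NF (Φ F' k)) := hstep
        _ ≤ ENNReal.ofReal C₁ * ∑' j, (ρa ^ (j - k) * ρb ^ (k - j)) * ag j
            + ENNReal.ofReal C₁ * ∑' j, (ρa ^ (j - k) * ρb ^ (k - j)) * af j :=
            add_le_add
              (hpiece g ag (hS_sig m g) hGmem hGball (fun j => rfl))
              (hpiece f af (hS_sig m f) hFmem hFball (fun j => rfl))
        _ = ENNReal.ofReal C₁ * ((∑' j, (ρa ^ (j - k) * ρb ^ (k - j)) * ag j)
            + ∑' j, (ρa ^ (j - k) * ρb ^ (k - j)) * af j) := by ring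
    -- combine
    have e1 : ∑' j, κ k j * ad j = Cm * ∑' j, (ρa ^ (j - k) * ρb ^ (k - j)) * ad j := by
      rw [← ENNReal.tsum_mul_left]
      exact tsum_congr fun j => by rw [hκ_def]; ring
    have e2 : ∑' j, κ k j * (2 * af j)
        = 2 * (Cm * ∑' j, (ρa ^ (j - k) * ρb ^ (k - j)) * af j) := by
      rw [← ENNReal.tsum_mul_left, ← ENNReal.tsum_mul_left]
      exact tsum_congr fun j => by rw [hκ_def]; ring
    have e3 : ∑' j, (ρa ^ (j - k) * ρb ^ (k - j)) * ag j
        ≤ (∑' j, (ρa ^ (j - k) * ρb ^ (k - j)) * ad j)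
          + ∑' j, (ρa ^ (j - k) * ρb ^ (k - j)) * af j := by
      rw [← ENNReal.tsum_add]
      refine ENNReal.tsum_le_tsum fun j => ?_
      rw [← mul_add]
      exact mul_le_mul_right (hag_split j) _
    refine le_trans hsum ?_
    refine le_trans (add_le_add hT1 (add_le_add hT2 hT3)) ?_
    rw [e1, e2]
    set X : ℝ≥0∞ := ∑' j, (ρa ^ (j - k) * ρb ^ (k - j)) * ad j with hX_def
    set Y : ℝ≥0∞ := ∑' j, (ρa ^ (j - k) * ρb ^ (k - j)) * af j with hY_def
    set Z : ℝ≥0∞ := ∑' j, (ρa ^ (j - k) * ρb ^ (k - j)) * ag j with hZ_def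
    have hZle : Z ≤ X + Y := e3
    calc ENNReal.ofReal C₀ * Z + (ENNReal.ofReal C₁ * (Z + Y) + ENNReal.ofReal C₀ * Y)
        ≤ ENNReal.ofReal C₀ * (X + Y)
          + (ENNReal.ofReal C₁ * ((X + Y) + Y) + ENNReal.ofReal C₀ * Y) := by
          exact add_le_add (mul_le_mul_right hZle _)
            (add_le_add (mul_le_mul_right (add_le_add hZle le_rfl) _) le_rfl)
      _ = Cm * X + 2 * (Cm * Y) := by rw [hCm_def]; ring
  -- the four sequences
  set u1 : ℕ → ℝ≥0∞ := fun k => if k ≤ K then cK * W else 0 with hu1_def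
  set u2 : ℕ → ℝ≥0∞ := fun k => ∑' j, κ k j * ad j with hu2_def
  set u3 : ℕ → ℝ≥0∞ := fun k => ∑' j, κ k j * (2 * (if j ≤ M then 0 else af j)) with hu3_def
  set u4 : ℕ → ℝ≥0∞ := fun k =>
    if k ≤ K then 0 else ∑' j, κ k j * (2 * (if j ≤ M then af j else 0)) with hu4_def
  have hpoint : ∀ k : ℕ,
      ENNReal.ofReal ((2:ℝ) ^ ((k:ℝ) * s) * NF ((Φ g - Φ f) k))
        ≤ u1 k + (u2 k + (u3 k + u4 k)) := by
    intro k
    by_cases hk : k ≤ K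
    · simp only [hu1_def, if_pos hk]
      exact le_trans (hlowk k hk) le_self_add
    · simp only [hu1_def, hu4_def, if_neg hk, zero_add]
      have hsplitaf : ∀ j, κ k j * (2 * af j)
          = κ k j * (2 * (if j ≤ M then 0 else af j))
            + κ k j * (2 * (if j ≤ M then af j else 0)) := by
        intro j
        rw [← mul_add, ← mul_add]
        congr 2
        by_cases hj : j ≤ M <;> simp [hj]
      refine le_trans (hhigh k) (le_of_eq ?_)
      simp only [hu2_def, hu3_def]
      rw [tsum_congr hsplitaf, ENNReal.tsum_add]
  -- assembling the norm bound
  have hfinal : sigmaNorm NF s q (Φ g - Φ f)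
      ≤ lnorm q u1 + (lnorm q u2 + (lnorm q u3 + lnorm q u4)) := by
    rw [sigmaNorm_eq_lnorm]
    refine le_trans (lnorm_mono q hpoint) ?_
    refine le_trans (lnorm_add_le hq _ _) ?_
    refine add_le_add le_rfl ?_
    refine le_trans (lnorm_add_le hq _ _) ?_
    exact add_le_add le_rfl (lnorm_add_le hq _ _)
  -- piece 1
  have hu1 : lnorm q u1 ≤ ((K:ℝ≥0∞) + 1) * (cK * W) := by
    refine le_trans (lnorm_le_tsum hq u1) ?_
    rw [tsum_eq_sum (s := Finset.range (K+1))
      (fun b hb => by simp only [hu1_def]; rw [if_neg (by simpa [Nat.lt_succ_iff] using hb)])]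
    calc ∑ k ∈ Finset.range (K+1), u1 k ≤ ∑ _k ∈ Finset.range (K+1), cK * W := by
          refine Finset.sum_le_sum fun k _ => ?_
          simp only [hu1_def]
          split
          · exact le_rfl
          · exact zero_le
      _ = ((K:ℝ≥0∞) + 1) * (cK * W) := by
          rw [Finset.sum_const, Finset.card_range, nsmul_eq_mul]
          push_cast
          ring
  -- piece 2
  have hu2 : lnorm q u2 ≤ D * W := by
    have h := lnorm_schur hq κ D hrow hcol ad
    have had : lnorm q ad = W := by
      rw [hW_def, sigmaNorm_eq_lnorm, had_def]
    rw [← had]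
    exact h
  -- piece 3
  have hu3 : lnorm q u3 ≤ ENNReal.ofReal (ε/4) := by
    have hre : u3 = fun k => ∑' j, (κ k j * 2) * (if j ≤ M then 0 else af j) := by
      funext k
      simp only [hu3_def]
      exact tsum_congr fun j => by ring
    have hrow2 : ∀ k, ∑' j, κ k j * 2 ≤ D * 2 := fun k => by
      rw [ENNReal.tsum_mul_right]
      exact mul_le_mul_left (hrow k) _
    have hcol2 : ∀ j, ∑' k, κ k j * 2 ≤ D * 2 := fun j => by
      rw [ENNReal.tsum_mul_right]
      exact mul_le_mul_left (hcol j) _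
    calc lnorm q u3 = lnorm q (fun k => ∑' j, (κ k j * 2) * (if j ≤ M then 0 else af j)) := by
          rw [hre]
      _ ≤ (D * 2) * lnorm q (fun j => if j ≤ M then 0 else af j) :=
          lnorm_schur hq _ (D * 2) hrow2 hcol2 _
      _ ≤ (D * 2) * ENNReal.ofReal η₁ := mul_le_mul_right hM _
      _ = 2 * D * ENNReal.ofReal η₁ := by ring
      _ ≤ ENNReal.ofReal (ε/4) := hu3target
  -- piece 4
  have hu4 : lnorm q u4 ≤ ENNReal.ofReal (ε/4) := by
    have hu4k : ∀ k, u4 k ≤ if k ≤ K then 0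
        else (2 * Cm * ENNReal.ofReal r * ((M:ℝ≥0∞) + 1)) * ρb ^ (k - M) := by
      intro k
      by_cases hk : k ≤ K
      · simp only [hu4_def, if_pos hk, le_refl]
      · simp only [hu4_def, if_neg hk]
        have hKk : K < k := by omega
        calc ∑' j, κ k j * (2 * (if j ≤ M then af j else 0))
            = ∑ j ∈ Finset.range (M+1), κ k j * (2 * (if j ≤ M then af j else 0)) := by
              refine tsum_eq_sum fun b hb => ?_
              rw [if_neg (by simpa [Nat.lt_succ_iff] using hb), mul_zero, mul_zero]
          _ ≤ ∑ _j ∈ Finset.range (M+1), (2 * Cm * ENNReal.ofReal r) * ρb ^ (k - M) := by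
              refine Finset.sum_le_sum fun j hj => ?_
              have hjM : j ≤ M := by simpa [Nat.lt_succ_iff] using hj
              have hjk : j < k := by omega
              rw [if_pos hjM, hκ_def]
              simp only
              rw [Nat.sub_eq_zero_of_le hjk.le, pow_zero, one_mul]
              calc Cm * ρb ^ (k - j) * (2 * af j)
                  ≤ Cm * ρb ^ (k - M) * (2 * ENNReal.ofReal r) := by
                    refine mul_le_mul' (mul_le_mul_right
                      (pow_le_pow_right_of_le_one' hρb1.le (by omega)) _)
                      (mul_le_mul_right (haf_le j) _)
                _ = (2 * Cm * ENNReal.ofReal r) * ρb ^ (k - M) := by ring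
          _ = ((M:ℝ≥0∞) + 1) * ((2 * Cm * ENNReal.ofReal r) * ρb ^ (k - M)) := by
              rw [Finset.sum_const, Finset.card_range, nsmul_eq_mul]
              push_cast
              ring
          _ = (2 * Cm * ENNReal.ofReal r * ((M:ℝ≥0∞) + 1)) * ρb ^ (k - M) := by ring
    refine le_trans (lnorm_le_tsum hq u4) ?_
    refine le_trans (ENNReal.tsum_le_tsum hu4k) ?_
    rw [shift_tsum_eq _ (K+1) (fun k hk => if_pos (by omega))]
    have hsimp : ∀ i : ℕ, (if i + (K+1) ≤ K then 0
        else (2 * Cm * ENNReal.ofReal r * ((M:ℝ≥0∞) + 1)) * ρb ^ (i + (K+1) - M))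
        = (2 * Cm * ENNReal.ofReal r * ((M:ℝ≥0∞) + 1)) * (ρb ^ (n₀ + 1) * ρb ^ i) := by
      intro i
      rw [if_neg (by omega), ← pow_add]
      congr 2
      rw [hK_def]
      omega
    rw [tsum_congr hsimp, ENNReal.tsum_mul_left, ENNReal.tsum_mul_left]
    have hρpow : ρb ^ (n₀ + 1) < ENNReal.ofReal (ε/4) / (G4 + 1) := hn₀ (n₀+1) (by omega)
    calc 2 * Cm * ENNReal.ofReal r * ((M:ℝ≥0∞) + 1) * (ρb ^ (n₀+1) * cb)
        = G4 * ρb ^ (n₀+1) := by rw [hG4_def]; ring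
      _ ≤ (G4 + 1) * (ENNReal.ofReal (ε/4) / (G4 + 1)) :=
          mul_le_mul' le_self_add hρpow.le
      _ = ENNReal.ofReal (ε/4) := ENNReal.mul_div_cancel
          (by simp) (ENNReal.add_ne_top.mpr ⟨hG4_ne, ENNReal.one_ne_top⟩)
  -- conclusion
  have hAW : ((K:ℝ≥0∞) + 1) * (cK * W) + D * W = A * W := by
    rw [hA_def]
    ring
  have hAδ : A * W < ENNReal.ofReal (ε/2) := by
    have h1 : A * W < A * ENNReal.ofReal δ := ENNReal.mul_lt_mul_right hA_pos hA_ne hgf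
    refine lt_of_lt_of_le h1 ?_
    calc A * ENNReal.ofReal δ ≤ ENNReal.ofReal (A.toReal + 1) * ENNReal.ofReal δ := by
          refine mul_le_mul_left ?_ _
          rw [← ENNReal.ofReal_toReal hA_ne]
          exact ENNReal.ofReal_le_ofReal (by
            rw [ENNReal.toReal_ofReal (by linarith)]
            linarith)
      _ = ENNReal.ofReal ((A.toReal + 1) * δ) := (ENNReal.ofReal_mul (by linarith)).symm
      _ = ENNReal.ofReal (ε/2) := by
          rw [hδ_def, mul_div_cancel₀ _ (by linarith : A.toReal + 1 ≠ 0)]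
  calc sigmaNorm NF s q (Φ g - Φ f)
      ≤ lnorm q u1 + (lnorm q u2 + (lnorm q u3 + lnorm q u4)) := hfinal
    _ ≤ (((K:ℝ≥0∞) + 1) * (cK * W) + D * W)
        + (ENNReal.ofReal (ε/4) + ENNReal.ofReal (ε/4)) := by
        have := add_le_add hu3 hu4
        calc lnorm q u1 + (lnorm q u2 + (lnorm q u3 + lnorm q u4))
            ≤ ((K:ℝ≥0∞) + 1) * (cK * W) + (D * W + (ENNReal.ofReal (ε/4) + ENNReal.ofReal (ε/4))) :=
              add_le_add hu1 (add_le_add hu2 (add_le_add hu3 hu4))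
          _ = (((K:ℝ≥0∞) + 1) * (cK * W) + D * W)
              + (ENNReal.ofReal (ε/4) + ENNReal.ofReal (ε/4)) := by rw [add_assoc]
    _ < ENNReal.ofReal (ε/2) + ENNReal.ofReal (ε/2) := by
        refine ENNReal.add_lt_add_of_lt_of_le ?_ ?_ ?_
        · exact ENNReal.add_ne_top.mpr ⟨ENNReal.ofReal_ne_top, ENNReal.ofReal_ne_top⟩
        · rw [hAW]
          exact hAδ
        · rw [← ENNReal.ofReal_add (by linarith) (by linarith)]
          exact ENNReal.ofReal_le_ofReal (by linarith)
    _ = ENNReal.ofReal ε := by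
        rw [← ENNReal.ofReal_add (by linarith) (by linarith)]
        norm_num
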